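/- Let A : ℝⁿ → ℝⁿ be a C¹ vector field admitting a global flow F. Let x ∈ ℝⁿ with A x ≠ 0, and suppose F t x converges to some point p ∈ ℝⁿ as t → ∞. Then for every continuous function φ : ℝⁿ → ℝ there exists c ∈ ℝ such that (∫_0^T φ(F t x)·‖A(F t x)‖ dt) / (∫_0^T ‖A(F t x)‖ dt) tends to c as T → ∞. (The case of Proposition 2.3's trichotomy in which the ω-limit set of x is a single singular point: forward length averages exist.) -/

import Mathlib

open Filter Topology MeasureTheory

/-- A continuous function on ℝ with a limit at `atTop` is bounded on `[0, ∞)`. -/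
lemma aux_bounded_on_nonneg (f : ℝ → ℝ) (hf : Continuous f) {ℓ : ℝ}
    (hfl : Tendsto f atTop (𝓝 ℓ)) : ∃ C : ℝ, 0 < C ∧ ∀ t : ℝ, 0 ≤ t → |f t| ≤ C := by
  obtain ⟨T₀, hT₀⟩ := (hfl.eventually (Metric.ball_mem_nhds ℓ one_pos)).exists_forall_of_atTop
  set T₁ := max T₀ 0 with hT₁
  obtain ⟨C₀, hC₀⟩ := (isCompact_Icc (a := (0:ℝ)) (b := T₁)).exists_bound_of_continuousOn
    hf.continuousOn
  refine ⟨max C₀ (|ℓ| + 1) + 1, by positivity, fun t ht => ?_⟩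
  rcases le_total t T₁ with h | h
  · have hb := hC₀ t ⟨ht, h⟩
    have := le_max_left C₀ (|ℓ| + 1)
    calc |f t| ≤ C₀ := hb
      _ ≤ max C₀ (|ℓ| + 1) + 1 := by linarith
  · have h1 : dist (f t) ℓ < 1 := hT₀ t (le_trans (le_max_left _ _) h)
    have h2 : |f t| ≤ |ℓ| + 1 := by
      have := abs_sub_abs_le_abs_sub (f t) ℓ
      rw [Real.dist_eq] at h1
      linarith
    have := le_max_right C₀ (|ℓ| + 1)
    calc |f t| ≤ |ℓ| + 1 := h2
      _ ≤ max C₀ (|ℓ| + 1) + 1 := by linarith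

/-- Cesàro-type averaging: if `f → ℓ` and `∫₀ᵀ g → ∞` with `g ≥ 0`, the weighted
average converges to `ℓ`. -/
lemma aux_average_tendsto (f g : ℝ → ℝ) (hf : Continuous f) (hg : Continuous g)
    (hg0 : ∀ t, 0 ≤ g t) {ℓ : ℝ} (hfl : Tendsto f atTop (𝓝 ℓ))
    (hG : Tendsto (fun T => ∫ t in (0:ℝ)..T, g t) atTop atTop) :
    Tendsto (fun T => (∫ t in (0:ℝ)..T, f t * g t) / (∫ t in (0:ℝ)..T, g t))
      atTop (𝓝 ℓ) := by
  set G : ℝ → ℝ := fun T => ∫ t in (0:ℝ)..T, g t with hGdef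
  set E : ℝ → ℝ := fun T => ∫ t in (0:ℝ)..T, (f t - ℓ) * g t with hEdef
  have hint : ∀ (h : ℝ → ℝ), Continuous h → ∀ a b : ℝ,
      IntervalIntegrable (fun t => h t * g t) volume a b :=
    fun h hh a b => (hh.mul hg).intervalIntegrable a b
  have hgint : ∀ a b : ℝ, IntervalIntegrable g volume a b := hg.intervalIntegrable
  -- key : E / G → 0
  have key : Tendsto (fun T => E T / G T) atTop (𝓝 0) := by
    rw [Metric.tendsto_atTop]
    intro ε hε
    obtain ⟨T₀', hT₀'⟩ := Metric.tendsto_atTop.mp hfl (ε / 2) (by linarith)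
    set T₀ : ℝ := max T₀' 0 with hT₀def
    have hsmall : ∀ t : ℝ, T₀ ≤ t → |f t - ℓ| ≤ ε / 2 := by
      intro t ht
      have := hT₀' t (le_trans (le_max_left _ _) ht)
      rw [Real.dist_eq] at this
      linarith
    obtain ⟨T₁, hT₁⟩ := (hG.eventually (eventually_ge_atTop
      (max (2 * |E T₀| / ε + 1) 1))).exists_forall_of_atTop
    refine ⟨max (max T₀ T₁) 0, fun T hT => ?_⟩
    have hTT₀ : T₀ ≤ T := le_trans (le_trans (le_max_left _ _) (le_max_left _ _)) hT
    have hTT₁ : T₁ ≤ T := le_trans (le_trans (le_max_right _ _) (le_max_left _ _)) hT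
    have hGT : max (2 * |E T₀| / ε + 1) 1 ≤ G T := hT₁ T hTT₁
    have hGTpos : 0 < G T := lt_of_lt_of_le one_pos (le_trans (le_max_right _ _) hGT)
    -- split E T
    have hsplit : E T = E T₀ + ∫ t in T₀..T, (f t - ℓ) * g t := by
      rw [hEdef]
      exact (intervalIntegral.integral_add_adjacent_intervals
        (hint _ (hf.sub continuous_const) 0 T₀) (hint _ (hf.sub continuous_const) T₀ T)).symm
    have htail : |∫ t in T₀..T, (f t - ℓ) * g t| ≤ ε / 2 * G T := by
      have h1 : |∫ t in T₀..T, (f t - ℓ) * g t| ≤ ∫ t in T₀..T, |(f t - ℓ) * g t| :=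
        intervalIntegral.abs_integral_le_integral_abs hTT₀
      have h2 : (∫ t in T₀..T, |(f t - ℓ) * g t|) ≤ ∫ t in T₀..T, ε / 2 * g t := by
        apply intervalIntegral.integral_mono_on hTT₀
          (((hf.sub continuous_const).mul hg).abs.intervalIntegrable _ _)
          ((continuous_const.mul hg).intervalIntegrable _ _)
        intro t ht
        show |(f t - ℓ) * g t| ≤ ε / 2 * g t
        rw [abs_mul, abs_of_nonneg (hg0 t)]
        exact mul_le_mul_of_nonneg_right (hsmall t ht.1) (hg0 t)
      have h3 : (∫ t in T₀..T, ε / 2 * g t) = ε / 2 * (G T - G T₀) := by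
        rw [intervalIntegral.integral_const_mul]
        congr 1
        rw [hGdef]
        simp only
        rw [eq_sub_iff_add_eq, add_comm]
        exact intervalIntegral.integral_add_adjacent_intervals (hgint 0 T₀) (hgint T₀ T)
      have hGT₀ : 0 ≤ G T₀ :=
        intervalIntegral.integral_nonneg (le_max_right _ _) (fun u _ => hg0 u)
      calc |∫ t in T₀..T, (f t - ℓ) * g t| ≤ ε / 2 * (G T - G T₀) := by
            rw [← h3]; exact le_trans h1 h2
        _ ≤ ε / 2 * G T := by nlinarith
    have hET : |E T| ≤ |E T₀| + ε / 2 * G T := by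
      rw [hsplit]
      exact le_trans (abs_add_le _ _) (by linarith [htail])
    have hGbig : 2 * |E T₀| / ε + 1 ≤ G T := le_trans (le_max_left _ _) hGT
    rw [Real.dist_eq, sub_zero, abs_div, abs_of_pos hGTpos, div_lt_iff₀ hGTpos]
    have hE₀ : |E T₀| < ε / 2 * G T := by
      have h4 : 2 * |E T₀| / ε < G T := lt_of_lt_of_le (by linarith) hGbig
      rw [div_lt_iff₀ hε] at h4
      nlinarith
    calc |E T| ≤ |E T₀| + ε / 2 * G T := hET
      _ < ε * G T := by nlinarith
  -- conclude
  have hGpos : ∀ᶠ T in atTop, 0 < G T := hG.eventually (eventually_gt_atTop 0)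
  have heq : ∀ᶠ T in atTop,
      (∫ t in (0:ℝ)..T, f t * g t) / G T = E T / G T + ℓ := by
    filter_upwards [hGpos] with T hT
    have hsum : (∫ t in (0:ℝ)..T, f t * g t) = E T + ℓ * G T := by
      rw [hEdef, hGdef]
      simp only
      rw [← intervalIntegral.integral_const_mul,
        ← intervalIntegral.integral_add (f := fun t => (f t - ℓ) * g t) (g := fun t => ℓ * g t) (hint _ (hf.sub continuous_const) 0 T)
          ((continuous_const.mul hg).intervalIntegrable _ _)]
      congr 1 with t
      ring
    rw [hsum, add_div, mul_div_assoc, div_self hT.ne', mul_one]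
  have hfin : Tendsto (fun T => E T / G T + ℓ) atTop (𝓝 (0 + ℓ)) :=
    key.add tendsto_const_nhds
  rw [zero_add] at hfin
  exact hfin.congr' (heq.mono fun T h => h.symm)

/-- The general real-analysis statement: weighted averages of a function with a limit
against a nonnegative weight that is positive at `0` always converge. -/
lemma aux_main (f g : ℝ → ℝ) (hf : Continuous f) (hg : Continuous g)
    (hg0 : ∀ t, 0 ≤ g t) (hgpos : 0 < g 0) {ℓ : ℝ} (hfl : Tendsto f atTop (𝓝 ℓ)) :
    ∃ c : ℝ, Tendsto (fun T => (∫ t in (0:ℝ)..T, f t * g t) / (∫ t in (0:ℝ)..T, g t))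
      atTop (𝓝 c) := by
  set G : ℝ → ℝ := fun T => ∫ t in (0:ℝ)..T, g t with hGdef
  have hgint : ∀ a b : ℝ, IntervalIntegrable g volume a b := hg.intervalIntegrable
  have hGmono : Monotone G := by
    intro S T hST
    have hsub : G T - G S = ∫ t in S..T, g t := by
      rw [hGdef]
      simp only
      rw [sub_eq_iff_eq_add, add_comm]
      exact (intervalIntegral.integral_add_adjacent_intervals (hgint 0 S) (hgint S T)).symm
    have h2 : 0 ≤ ∫ t in S..T, g t :=
      intervalIntegral.integral_nonneg hST (fun u _ => hg0 u)
    linarith [hsub ▸ h2]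
  rcases tendsto_of_monotone hGmono with hG | ⟨L, hL⟩
  · exact ⟨ℓ, aux_average_tendsto f g hf hg hg0 hfl hG⟩
  -- bounded-length case
  · obtain ⟨C, hCpos, hC⟩ := aux_bounded_on_nonneg f hf hfl
    -- G δ > 0 for some δ > 0
    have hδex : ∃ δ : ℝ, 0 < δ ∧ 0 < G δ := by
      obtain ⟨δ, hδpos, hδ⟩ := Metric.eventually_nhds_iff.mp
        ((hg.continuousAt (x := 0)).eventually (eventually_gt_nhds (half_lt_self hgpos)))
      refine ⟨δ / 2, by linarith, ?_⟩
      have hge : ∀ u ∈ Set.Icc (0:ℝ) (δ / 2), g 0 / 2 ≤ g u := by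
        intro u hu
        have : dist u 0 < δ := by
          rw [Real.dist_eq, sub_zero, abs_of_nonneg hu.1]; linarith [hu.2]
        exact le_of_lt (hδ this)
      have h1 : (∫ _t in (0:ℝ)..(δ/2), g 0 / 2) ≤ G (δ/2) :=
        intervalIntegral.integral_mono_on (by linarith)
          intervalIntegrable_const (hgint 0 (δ/2)) hge
      rw [intervalIntegral.integral_const, smul_eq_mul, sub_zero] at h1
      have : 0 < (δ / 2) * (g 0 / 2) := by positivity
      exact lt_of_lt_of_le this h1
    obtain ⟨δ, hδpos, hGδ⟩ := hδex
    have hLpos : 0 < L := lt_of_lt_of_le hGδ (hGmono.ge_of_tendsto hL δ)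
    have hGleL : ∀ T, G T ≤ L := fun T => hGmono.ge_of_tendsto hL T
    -- numerator converges: N T = H T - C * G T with H monotone bounded on [0,∞)
    set H : ℝ → ℝ := fun T => ∫ t in (0:ℝ)..T, (f t + C) * g t with hHdef
    have hfgint : ∀ a b : ℝ, IntervalIntegrable (fun t => (f t + C) * g t) volume a b :=
      ((hf.add continuous_const).mul hg).intervalIntegrable
    have hHmono : ∀ S T : ℝ, 0 ≤ S → S ≤ T → H S ≤ H T := by
      intro S T hS hST
      have hsub : H T - H S = ∫ t in S..T, (f t + C) * g t := by
        rw [hHdef]; simp only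
        rw [sub_eq_iff_eq_add, add_comm]
        exact (intervalIntegral.integral_add_adjacent_intervals (hfgint 0 S)
          (hfgint S T)).symm
      have h2 : 0 ≤ ∫ t in S..T, (f t + C) * g t := by
        apply intervalIntegral.integral_nonneg hST
        intro u hu
        have hCu := abs_le.mp (hC u (le_trans hS hu.1))
        exact mul_nonneg (by linarith [hCu.1]) (hg0 u)
      linarith [hsub ▸ h2]
    have hHbound : ∀ T : ℝ, 0 ≤ T → H T ≤ 2 * C * L := by
      intro T h
      have h1 : H T ≤ ∫ t in (0:ℝ)..T, 2 * C * g t := by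
        apply intervalIntegral.integral_mono_on h (hfgint 0 T)
          ((continuous_const.mul hg).intervalIntegrable _ _)
        intro u hu
        have hCu := abs_le.mp (hC u hu.1)
        show (f u + C) * g u ≤ 2 * C * g u
        nlinarith [hg0 u]
      rw [intervalIntegral.integral_const_mul] at h1
      calc H T ≤ 2 * C * G T := h1
        _ ≤ 2 * C * L := by nlinarith [hGleL T, hCpos]
    set H' : ℝ → ℝ := fun T => H (max T 0) with hH'def
    have hH'mono : Monotone H' := fun S T h =>
      hHmono _ _ (le_max_right _ _) (max_le_max h le_rfl)
    obtain hM | ⟨M, hM⟩ := tendsto_of_monotone hH'mono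
    · exfalso
      obtain ⟨T, hT⟩ := (hM.eventually (eventually_gt_atTop (2 * C * L))).exists
      exact absurd (hHbound (max T 0) (le_max_right _ _)) (not_le.mpr hT)
    have hHM : Tendsto H atTop (𝓝 M) := by
      apply hM.congr'
      filter_upwards [eventually_ge_atTop (0:ℝ)] with T hT
      rw [hH'def]; simp only
      rw [max_eq_left hT]
    have hN : Tendsto (fun T => ∫ t in (0:ℝ)..T, f t * g t) atTop (𝓝 (M - C * L)) := by
      have heq : ∀ T : ℝ, (∫ t in (0:ℝ)..T, f t * g t) = H T - C * G T := by
        intro T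
        rw [hHdef, hGdef]; simp only
        rw [← intervalIntegral.integral_const_mul,
          ← intervalIntegral.integral_sub (f := fun t => (f t + C) * g t) (g := fun t => C * g t) (hfgint 0 T)
            ((continuous_const.mul hg).intervalIntegrable _ _)]
        congr 1 with t
        ring
      simp only [heq]
      exact hHM.sub (tendsto_const_nhds.mul hL)
    exact ⟨(M - C * L) / L, hN.div hL hLpos.ne'⟩

/-- Proposition 2.3, singular-point case: if the forward orbit of `x` converges to a point,
then the forward length average of every continuous function exists at `x`. -/
theorem length_average_exists_of_tendsto_singularity
    (n : ℕ)
    (A : EuclideanSpace ℝ (Fin n) → EuclideanSpace ℝ (Fin n))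
    (hA : ContDiff ℝ 1 A)
    (F : ℝ → EuclideanSpace ℝ (Fin n) → EuclideanSpace ℝ (Fin n))
    (hF0 : ∀ y, F 0 y = y)
    (hFadd : ∀ s t : ℝ, ∀ y, F (s + t) y = F s (F t y))
    (hFderiv : ∀ y, ∀ t : ℝ, HasDerivAt (fun τ => F τ y) (A (F t y)) t)
    (x : EuclideanSpace ℝ (Fin n))
    (hx : A x ≠ 0)
    (p : EuclideanSpace ℝ (Fin n))
    (hconv : Tendsto (fun t : ℝ => F t x) atTop (𝓝 p)) :
    ∀ φ : EuclideanSpace ℝ (Fin n) → ℝ, Continuous φ →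
      ∃ c : ℝ, Tendsto
        (fun T : ℝ => (∫ t in (0:ℝ)..T, φ (F t x) * ‖A (F t x)‖) /
                      (∫ t in (0:ℝ)..T, ‖A (F t x)‖))
        atTop (𝓝 c) := by
  intro φ hφ
  have hFx : Continuous (fun t : ℝ => F t x) :=
    continuous_iff_continuousAt.mpr fun t => (hFderiv x t).continuousAt
  have hAcont : Continuous A := hA.continuous
  exact aux_main (fun t => φ (F t x)) (fun t => ‖A (F t x)‖)
    (hφ.comp hFx) ((hAcont.comp hFx).norm) (fun t => norm_nonneg _)
    (by show 0 < ‖A (F 0 x)‖; rw [hF0]; exact norm_pos_iff.mpr hx)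
    (hφ.continuousAt.tendsto.comp hconv)
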